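/- Squared Loewner inequalities for regularized approximations: if K and K̃ are symmetric PSD with 0 ⪯ K - K̃ ⪯ (γ/(1-ε))I for γ > 0 and 0 ≤ ε < 1, then (K + γI)² ⪯ (2/(1-ε))² (K̃ + γI)² and (K̃ + γI)² ⪯ (2/(1-ε))² (K + γI)². Consequently ((1-ε)²/4)(K̃ + γI)^{-2} ⪯ (K + γI)^{-2} ⪯ (4/(1-ε)²)(K̃ + γI)^{-2}. -/

import Mathlib

open Matrix

namespace SqLoewnerAux
variable {n : ℕ}

noncomputable def en (v : Fin n → ℝ) : ℝ := ‖(WithLp.equiv 2 (Fin n → ℝ)).symm v‖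

lemma dot_eq_inner (u v : Fin n → ℝ) :
    u ⬝ᵥ v = inner ℝ ((WithLp.equiv 2 (Fin n → ℝ)).symm u) ((WithLp.equiv 2 (Fin n → ℝ)).symm v) := by
  simp [PiLp.inner_apply, dotProduct, RCLike.inner_apply, mul_comm]

lemma en_nonneg (v : Fin n → ℝ) : 0 ≤ en v := norm_nonneg _

lemma dot_self (v : Fin n → ℝ) : v ⬝ᵥ v = en v ^ 2 := by
  rw [dot_eq_inner]; exact real_inner_self_eq_norm_sq _

lemma en_add_le (u v : Fin n → ℝ) : en (u + v) ≤ en u + en v := by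
  have : (WithLp.equiv 2 (Fin n → ℝ)).symm (u + v)
      = (WithLp.equiv 2 (Fin n → ℝ)).symm u + (WithLp.equiv 2 (Fin n → ℝ)).symm v := rfl
  rw [en, this]; exact norm_add_le _ _

lemma en_neg (v : Fin n → ℝ) : en (-v) = en v := by
  have : (WithLp.equiv 2 (Fin n → ℝ)).symm (-v) = -((WithLp.equiv 2 (Fin n → ℝ)).symm v) := rfl
  rw [en, this, norm_neg]; rfl

lemma cauchy (u v : Fin n → ℝ) : u ⬝ᵥ v ≤ en u * en v := by
  rw [dot_eq_inner]; exact real_inner_le_norm _ _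

lemma herm_dot {M : Matrix (Fin n) (Fin n) ℝ} (hM : M.IsHermitian) (x y : Fin n → ℝ) :
    x ⬝ᵥ (M *ᵥ y) = (M *ᵥ x) ⬝ᵥ y := by
  have ht : Mᵀ = M := by
    ext i j
    have := congrFun (congrFun hM.eq i) j
    simpa [conjTranspose_apply] using this
  rw [dotProduct_mulVec, ← mulVec_transpose, ht]

lemma psd_quad {M : Matrix (Fin n) (Fin n) ℝ} (hM : M.PosSemidef) (x : Fin n → ℝ) :
    0 ≤ x ⬝ᵥ (M *ᵥ x) := by simpa using hM.dotProduct_mulVec_nonneg x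

lemma psd_of_quad {M : Matrix (Fin n) (Fin n) ℝ} (hM : M.IsHermitian)
    (h : ∀ x, 0 ≤ x ⬝ᵥ (M *ᵥ x)) : M.PosSemidef :=
  .of_dotProduct_mulVec_nonneg hM (fun x => by simpa using h x)

lemma sq_quad {M : Matrix (Fin n) (Fin n) ℝ} (hM : M.IsHermitian) (x : Fin n → ℝ) :
    x ⬝ᵥ (M ^ 2 *ᵥ x) = en (M *ᵥ x) ^ 2 := by
  rw [pow_two, ← mulVec_mulVec, herm_dot hM, dot_self]

lemma herm_smul {M : Matrix (Fin n) (Fin n) ℝ} (h : M.IsHermitian) (r : ℝ) :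
    (r • M).IsHermitian := by
  show (r • M)ᴴ = r • M
  rw [conjTranspose_smul, star_trivial, h.eq]

/-- quadratic upper bound from `M ⪯ δ•1`. -/
lemma quad_le {M : Matrix (Fin n) (Fin n) ℝ} {δ : ℝ}
    (hu : (δ • (1 : Matrix (Fin n) (Fin n) ℝ) - M).PosSemidef) (x : Fin n → ℝ) :
    x ⬝ᵥ (M *ᵥ x) ≤ δ * en x ^ 2 := by
  have h := psd_quad hu x
  rw [sub_mulVec, dotProduct_sub, smul_mulVec, one_mulVec, dotProduct_smul,
    smul_eq_mul, dot_self] at h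
  linarith

/-- lower bound `γ‖x‖ ≤ ‖Px‖` from `γ•1 ⪯ P`. -/
lemma lower {P : Matrix (Fin n) (Fin n) ℝ} {γ : ℝ} (hγ : 0 < γ)
    (hl : (P - γ • (1 : Matrix (Fin n) (Fin n) ℝ)).PosSemidef) (x : Fin n → ℝ) :
    γ * en x ≤ en (P *ᵥ x) := by
  have h := psd_quad hl x
  rw [sub_mulVec, dotProduct_sub, smul_mulVec, one_mulVec, dotProduct_smul,
    smul_eq_mul, dot_self] at h
  have h2 : x ⬝ᵥ (P *ᵥ x) ≤ en x * en (P *ᵥ x) := cauchy _ _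
  rcases eq_or_lt_of_le (en_nonneg x) with hx | hx
  · rw [← hx]; simpa using en_nonneg (P *ᵥ x)
  · nlinarith [en_nonneg (P *ᵥ x)]

/-- `‖Dx‖ ≤ δ‖x‖` from `0 ⪯ D ⪯ δ•1`. -/
lemma upper {D : Matrix (Fin n) (Fin n) ℝ} {δ : ℝ} (hδ : 0 ≤ δ)
    (hD : D.PosSemidef)
    (hu : (δ • (1 : Matrix (Fin n) (Fin n) ℝ) - D).PosSemidef) (x : Fin n → ℝ) :
    en (D *ᵥ x) ≤ δ * en x := by
  obtain ⟨S, hS, hSS⟩ : ∃ S : Matrix (Fin n) (Fin n) ℝ, S.PosSemidef ∧ S * S = D := by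
    open scoped MatrixOrder in
    exact ⟨CFC.sqrt D, (CFC.sqrt_nonneg D).posSemidef, CFC.sqrt_mul_sqrt_self D hD.nonneg⟩
  have key : en (D *ᵥ x) ^ 2 ≤ (δ * en x) ^ 2 := by
    have e1 : D *ᵥ x = S *ᵥ (S *ᵥ x) := by rw [mulVec_mulVec, hSS]
    have e2 : en (D *ᵥ x) ^ 2 = (S *ᵥ x) ⬝ᵥ (D *ᵥ (S *ᵥ x)) := by
      rw [← dot_self, e1, herm_dot hS.1, mulVec_mulVec, hSS, dotProduct_comm]
    have e3 : (S *ᵥ x) ⬝ᵥ (D *ᵥ (S *ᵥ x)) ≤ δ * en (S *ᵥ x) ^ 2 := quad_le hu _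
    have e4 : en (S *ᵥ x) ^ 2 = x ⬝ᵥ (D *ᵥ x) := by
      rw [← dot_self, ← herm_dot hS.1, mulVec_mulVec, hSS]
    have e5 : x ⬝ᵥ (D *ᵥ x) ≤ δ * en x ^ 2 := quad_le hu _
    calc en (D *ᵥ x) ^ 2 = (S *ᵥ x) ⬝ᵥ (D *ᵥ (S *ᵥ x)) := e2
      _ ≤ δ * en (S *ᵥ x) ^ 2 := e3
      _ = δ * (x ⬝ᵥ (D *ᵥ x)) := by rw [e4]
      _ ≤ δ * (δ * en x ^ 2) := by
          exact mul_le_mul_of_nonneg_left e5 hδ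
      _ = (δ * en x) ^ 2 := by ring
  have h1 := en_nonneg (D *ᵥ x)
  have h2 : 0 ≤ δ * en x := mul_nonneg hδ (en_nonneg x)
  nlinarith

/-- perturbation bound. -/
lemma bound {P Q : Matrix (Fin n) (Fin n) ℝ} {κ : ℝ}
    (h : ∀ x, en ((Q - P) *ᵥ x) ≤ κ * en (P *ᵥ x)) (x : Fin n → ℝ) :
    en (Q *ᵥ x) ≤ (1 + κ) * en (P *ᵥ x) := by
  have e : Q *ᵥ x = P *ᵥ x + (Q - P) *ᵥ x := by
    rw [sub_mulVec]; abel
  calc en (Q *ᵥ x) = en (P *ᵥ x + (Q - P) *ᵥ x) := by rw [← e]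
    _ ≤ en (P *ᵥ x) + en ((Q - P) *ᵥ x) := en_add_le _ _
    _ ≤ en (P *ᵥ x) + κ * en (P *ᵥ x) := by linarith [h x]
    _ = (1 + κ) * en (P *ᵥ x) := by ring

lemma smul_one_posDef {γ : ℝ} (hγ : 0 < γ) :
    (γ • (1 : Matrix (Fin n) (Fin n) ℝ)).PosDef := by
  refine .of_dotProduct_mulVec_pos (herm_smul isHermitian_one γ) (fun x hx => ?_)
  have h0 : 0 < star x ⬝ᵥ x := dotProduct_star_self_pos_iff.mpr hx
  rw [smul_mulVec, one_mulVec, dotProduct_smul, smul_eq_mul]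
  exact mul_pos hγ h0

end SqLoewnerAux

open SqLoewnerAux in
/-- Squared Loewner inequalities for regularized approximations. -/
theorem squared_loewner_approx {n : ℕ} (K Kt : Matrix (Fin n) (Fin n) ℝ)
    (hK : K.PosSemidef) (hKt : Kt.PosSemidef)
    (γ ε : ℝ) (hγ : 0 < γ) (hε0 : 0 ≤ ε) (hε1 : ε < 1)
    (h1 : (K - Kt).PosSemidef)
    (h2 : ((γ / (1 - ε)) • (1 : Matrix (Fin n) (Fin n) ℝ) - (K - Kt)).PosSemidef) :
    ((2 / (1 - ε)) ^ 2 • (Kt + γ • 1) ^ 2 - (K + γ • 1) ^ 2).PosSemidef ∧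
    ((2 / (1 - ε)) ^ 2 • (K + γ • 1) ^ 2 - (Kt + γ • 1) ^ 2).PosSemidef ∧
    (((K + γ • 1)⁻¹) ^ 2 - ((1 - ε) ^ 2 / 4) • ((Kt + γ • 1)⁻¹) ^ 2).PosSemidef ∧
    ((4 / (1 - ε) ^ 2) • ((Kt + γ • 1)⁻¹) ^ 2 - ((K + γ • 1)⁻¹) ^ 2).PosSemidef := by
  have hε : (0:ℝ) < 1 - ε := by linarith
  set A := K + γ • (1 : Matrix (Fin n) (Fin n) ℝ) with hAdef
  set B := Kt + γ • (1 : Matrix (Fin n) (Fin n) ℝ) with hBdef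
  set D := K - Kt with hDdef
  set δ := γ / (1 - ε) with hδdef
  set c := 2 / (1 - ε) with hcdef
  have hδpos : 0 < δ := div_pos hγ hε
  have hκ : 0 ≤ δ / γ := le_of_lt (div_pos hδpos hγ)
  have hcpos : 0 < c := div_pos (by norm_num) hε
  -- hermitian facts
  have hγ1_h : (γ • (1 : Matrix (Fin n) (Fin n) ℝ)).IsHermitian := herm_smul isHermitian_one γ
  have hA_h : A.IsHermitian := hK.1.add hγ1_h
  have hB_h : B.IsHermitian := hKt.1.add hγ1_h
  have hAi_h : A⁻¹.IsHermitian := hA_h.inv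
  have hBi_h : B⁻¹.IsHermitian := hB_h.inv
  -- pos def and inverses
  have hγ1_pd : (γ • (1 : Matrix (Fin n) (Fin n) ℝ)).PosDef := smul_one_posDef hγ
  have hA_pd : A.PosDef := Matrix.PosDef.posSemidef_add hK hγ1_pd
  have hB_pd : B.PosDef := Matrix.PosDef.posSemidef_add hKt hγ1_pd
  have hdetA : IsUnit A.det := hA_pd.det_pos.ne'.isUnit
  have hdetB : IsUnit B.det := hB_pd.det_pos.ne'.isUnit
  have hAAi : A * A⁻¹ = 1 := mul_nonsing_inv _ hdetA
  have hAiA : A⁻¹ * A = 1 := nonsing_inv_mul _ hdetA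
  have hBBi : B * B⁻¹ = 1 := mul_nonsing_inv _ hdetB
  have hBiB : B⁻¹ * B = 1 := nonsing_inv_mul _ hdetB
  -- basic identities
  have hABD : A - B = D := by
    show (K + γ • 1) - (Kt + γ • 1) = K - Kt
    abel
  -- lower bounds
  have hAl : ∀ x, γ * en x ≤ en (A *ᵥ x) := by
    intro x
    have hsub : A - γ • (1 : Matrix (Fin n) (Fin n) ℝ) = K := by
      show (K + γ • 1) - γ • 1 = K; abel
    exact lower hγ (hsub ▸ hK) x
  have hBl : ∀ x, γ * en x ≤ en (B *ᵥ x) := by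
    intro x
    have hsub : B - γ • (1 : Matrix (Fin n) (Fin n) ℝ) = Kt := by
      show (Kt + γ • 1) - γ • 1 = Kt; abel
    exact lower hγ (hsub ▸ hKt) x
  -- D bound
  have hDb : ∀ x, en (D *ᵥ x) ≤ δ * en x := upper (le_of_lt hδpos) h1 h2
  -- inverse norm bounds
  have hAib : ∀ u, en (A⁻¹ *ᵥ u) ≤ (1/γ) * en u := by
    intro u
    have h := hAl (A⁻¹ *ᵥ u)
    rw [mulVec_mulVec, hAAi, one_mulVec] at h
    calc en (A⁻¹ *ᵥ u) = (1/γ) * (γ * en (A⁻¹ *ᵥ u)) := by field_simp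
      _ ≤ (1/γ) * en u := by
          exact mul_le_mul_of_nonneg_left h (by positivity)
  have hBib : ∀ u, en (B⁻¹ *ᵥ u) ≤ (1/γ) * en u := by
    intro u
    have h := hBl (B⁻¹ *ᵥ u)
    rw [mulVec_mulVec, hBBi, one_mulVec] at h
    calc en (B⁻¹ *ᵥ u) = (1/γ) * (γ * en (B⁻¹ *ᵥ u)) := by field_simp
      _ ≤ (1/γ) * en u := by
          exact mul_le_mul_of_nonneg_left h (by positivity)
  -- κ bound
  have hκc : 1 + δ / γ ≤ c := by
    rw [hδdef, hcdef, div_div_cancel_left' hγ.ne']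
    have key : 2 / (1 - ε) - (1 + (1 - ε)⁻¹) = ε / (1 - ε) := by
      field_simp
      ring
    have h0 : 0 ≤ ε / (1 - ε) := div_nonneg hε0 hε.le
    linarith
  -- four pointwise bounds
  have hb1 : ∀ x, en (A *ᵥ x) ≤ (1 + δ/γ) * en (B *ᵥ x) := by
    refine bound (fun x => ?_)
    rw [hABD]
    calc en (D *ᵥ x) ≤ δ * en x := hDb x
      _ = (δ/γ) * (γ * en x) := by field_simp
      _ ≤ (δ/γ) * en (B *ᵥ x) := mul_le_mul_of_nonneg_left (hBl x) hκ
  have hb2 : ∀ x, en (B *ᵥ x) ≤ (1 + δ/γ) * en (A *ᵥ x) := by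
    refine bound (fun x => ?_)
    have hBA : B - A = -D := by rw [← hABD]; abel
    rw [hBA, neg_mulVec, en_neg]
    calc en (D *ᵥ x) ≤ δ * en x := hDb x
      _ = (δ/γ) * (γ * en x) := by field_simp
      _ ≤ (δ/γ) * en (A *ᵥ x) := mul_le_mul_of_nonneg_left (hAl x) hκ
  have hb3 : ∀ x, en (B⁻¹ *ᵥ x) ≤ (1 + δ/γ) * en (A⁻¹ *ᵥ x) := by
    refine bound (fun x => ?_)
    have hid : B⁻¹ - A⁻¹ = B⁻¹ * D * A⁻¹ := by
      calc B⁻¹ - A⁻¹ = B⁻¹ * (A * A⁻¹) - (B⁻¹ * B) * A⁻¹ := by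
            rw [hAAi, hBiB, mul_one, one_mul]
        _ = B⁻¹ * (A - B) * A⁻¹ := by noncomm_ring
        _ = B⁻¹ * D * A⁻¹ := by rw [hABD]
    rw [hid, ← mulVec_mulVec, ← mulVec_mulVec]
    calc en (B⁻¹ *ᵥ (D *ᵥ (A⁻¹ *ᵥ x))) ≤ (1/γ) * en (D *ᵥ (A⁻¹ *ᵥ x)) := hBib _
      _ ≤ (1/γ) * (δ * en (A⁻¹ *ᵥ x)) :=
          mul_le_mul_of_nonneg_left (hDb _) (by positivity)
      _ = (δ/γ) * en (A⁻¹ *ᵥ x) := by ring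
  have hb4 : ∀ x, en (A⁻¹ *ᵥ x) ≤ (1 + δ/γ) * en (B⁻¹ *ᵥ x) := by
    refine bound (fun x => ?_)
    have hid : A⁻¹ - B⁻¹ = -(A⁻¹ * D * B⁻¹) := by
      have : A⁻¹ - B⁻¹ = A⁻¹ * (B * B⁻¹) - (A⁻¹ * A) * B⁻¹ := by
        rw [hBBi, hAiA, mul_one, one_mul]
      rw [this, ← hABD]
      noncomm_ring
    rw [hid, neg_mulVec, en_neg, ← mulVec_mulVec, ← mulVec_mulVec]
    calc en (A⁻¹ *ᵥ (D *ᵥ (B⁻¹ *ᵥ x))) ≤ (1/γ) * en (D *ᵥ (B⁻¹ *ᵥ x)) := hAib _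
      _ ≤ (1/γ) * (δ * en (B⁻¹ *ᵥ x)) :=
          mul_le_mul_of_nonneg_left (hDb _) (by positivity)
      _ = (δ/γ) * en (B⁻¹ *ᵥ x) := by ring
  -- c-bounds
  have hcb1 : ∀ x, en (A *ᵥ x) ≤ c * en (B *ᵥ x) := fun x =>
    le_trans (hb1 x) (mul_le_mul_of_nonneg_right hκc (en_nonneg _))
  have hcb2 : ∀ x, en (B *ᵥ x) ≤ c * en (A *ᵥ x) := fun x =>
    le_trans (hb2 x) (mul_le_mul_of_nonneg_right hκc (en_nonneg _))
  have hcb3 : ∀ x, en (B⁻¹ *ᵥ x) ≤ c * en (A⁻¹ *ᵥ x) := fun x =>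
    le_trans (hb3 x) (mul_le_mul_of_nonneg_right hκc (en_nonneg _))
  have hcb4 : ∀ x, en (A⁻¹ *ᵥ x) ≤ c * en (B⁻¹ *ᵥ x) := fun x =>
    le_trans (hb4 x) (mul_le_mul_of_nonneg_right hκc (en_nonneg _))
  refine ⟨?_, ?_, ?_, ?_⟩
  · refine psd_of_quad ((herm_smul (hB_h.pow 2) _).sub (hA_h.pow 2)) (fun x => ?_)
    rw [sub_mulVec, dotProduct_sub, smul_mulVec, dotProduct_smul, smul_eq_mul,
      sq_quad hB_h, sq_quad hA_h]
    have h := pow_le_pow_left₀ (en_nonneg _) (hcb1 x) 2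
    have he : (c * en (B *ᵥ x)) ^ 2 = c ^ 2 * en (B *ᵥ x) ^ 2 := by ring
    rw [he] at h
    linarith
  · refine psd_of_quad ((herm_smul (hA_h.pow 2) _).sub (hB_h.pow 2)) (fun x => ?_)
    rw [sub_mulVec, dotProduct_sub, smul_mulVec, dotProduct_smul, smul_eq_mul,
      sq_quad hA_h, sq_quad hB_h]
    have h := pow_le_pow_left₀ (en_nonneg _) (hcb2 x) 2
    have he : (c * en (A *ᵥ x)) ^ 2 = c ^ 2 * en (A *ᵥ x) ^ 2 := by ring
    rw [he] at h
    linarith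
  · refine psd_of_quad ((hAi_h.pow 2).sub (herm_smul (hBi_h.pow 2) _)) (fun x => ?_)
    rw [sub_mulVec, dotProduct_sub, smul_mulVec, dotProduct_smul, smul_eq_mul,
      sq_quad hAi_h, sq_quad hBi_h]
    have h := pow_le_pow_left₀ (en_nonneg _) (hcb3 x) 2
    have hr : (0:ℝ) ≤ (1 - ε) ^ 2 / 4 := by positivity
    have h2 := mul_le_mul_of_nonneg_left h hr
    have he : (1 - ε) ^ 2 / 4 * (c * en (A⁻¹ *ᵥ x)) ^ 2
        = ((1 - ε) ^ 2 / 4 * c ^ 2) * en (A⁻¹ *ᵥ x) ^ 2 := by ring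
    have hrc : (1 - ε) ^ 2 / 4 * c ^ 2 = 1 := by
      rw [hcdef]; field_simp; ring
    rw [he, hrc, one_mul] at h2
    linarith
  · refine psd_of_quad ((herm_smul (hBi_h.pow 2) _).sub (hAi_h.pow 2)) (fun x => ?_)
    rw [sub_mulVec, dotProduct_sub, smul_mulVec, dotProduct_smul, smul_eq_mul,
      sq_quad hBi_h, sq_quad hAi_h]
    have h := pow_le_pow_left₀ (en_nonneg _) (hcb4 x) 2
    have he : (c * en (B⁻¹ *ᵥ x)) ^ 2 = c ^ 2 * en (B⁻¹ *ᵥ x) ^ 2 := by ring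
    have hc2 : (4 / (1 - ε) ^ 2) = c ^ 2 := by rw [hcdef]; field_simp; norm_num
    rw [he] at h
    rw [hc2]
    linarith
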